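/- Let p and q be distinct primes with p ≡ 1 (mod q), and let t be an element of multiplicative order q in (ℤ/p²)ˣ. On the set B = ℤ/p² × ℤ/q with componentwise addition +, define (n,m) ∘ (s,r) = (n + tᵐ·s, m + r). Then (B,∘) is a group isomorphic to the semidirect product ℤ/p² ⋊ ℤ/q in which the generator 1 of ℤ/q acts by multiplication by t, the kernel of λ has order p², and both (B,+,∘) and (B,∘,+) are skew left braces (i.e., (B,+,∘) is a bi-skew brace). Moreover, up to brace isomorphism (B,+,∘) is the unique left brace with additive group cyclic of order p²q whose kernel of λ has order p². -/

import Mathlib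

/-- `f` is a left-brace multiplication on the abelian group `B`: `(B, f)` is a group
with identity `0` and `f a (b + c) = f a b - a + f a c` holds. -/
def IsLeftBrace {B : Type*} [AddCommGroup B] (f : B → B → B) : Prop :=
  (∀ a b c, f (f a b) c = f a (f b c)) ∧
  (∀ a, f 0 a = a) ∧
  (∀ a, f a 0 = a) ∧
  (∀ a, ∃ a', f a' a = 0) ∧
  (∀ a b c, f a (b + c) = f a b - a + f a c)

/-- The kernel of `λ`: the set of `a` with `λ_a = id`, i.e. `a ∘ b = a + b` for all `b`. -/
def kerLambda {B : Type*} [AddCommGroup B] (f : B → B → B) : Set B :=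
  {a | ∀ b, f a b = a + b}

/-- The circle operation `(n, m) ∘ (s, r) = (n + tᵐ s, m + r)` on `ℤ/p² × ℤ/q`,
where `t` is a unit of `ℤ/p²`. -/
def circ7 (p q : ℕ) (t : (ZMod (p ^ 2))ˣ) :
    ZMod (p ^ 2) × ZMod q → ZMod (p ^ 2) × ZMod q → ZMod (p ^ 2) × ZMod q :=
  fun x y => (x.1 + (t : ZMod (p ^ 2)) ^ (x.2).val * y.1, x.2 + y.2)

section TPow
variable {p q : ℕ} [NeZero q] (t : (ZMod (p ^ 2))ˣ)

lemma tpow_congr (ht : orderOf t = q) {a b : ℕ} (h : a % q = b % q) : t ^ a = t ^ b :=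
  pow_eq_pow_iff_modEq.mpr (by rw [ht]; exact h)

lemma tpow_add (ht : orderOf t = q) (m r : ZMod q) :
    (t : ZMod (p ^ 2)) ^ (m + r).val
      = (t : ZMod (p ^ 2)) ^ m.val * (t : ZMod (p ^ 2)) ^ r.val := by
  have h1 : t ^ (m + r).val = t ^ m.val * t ^ r.val := by
    rw [← pow_add]
    exact tpow_congr t ht (by rw [ZMod.val_add, Nat.mod_mod_of_dvd _ dvd_rfl])
  exact_mod_cast congrArg Units.val h1

lemma tpow_neg_mul (ht : orderOf t = q) (m : ZMod q) :
    (t : ZMod (p ^ 2)) ^ m.val * (t : ZMod (p ^ 2)) ^ (-m).val = 1 := by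
  rw [← tpow_add t ht, add_neg_cancel, ZMod.val_zero, pow_zero]

end TPow

/-- `{a : α × β // a.2 = 0} ≃ α`. -/
def sndZeroEquiv (α β : Type*) [Zero β] : {a : α × β | a.2 = 0} ≃ α where
  toFun x := x.1.1
  invFun n := ⟨(n, 0), rfl⟩
  left_inv := by rintro ⟨⟨n, m⟩, h⟩; exact Subtype.ext (Prod.ext rfl (by exact h.symm))
  right_inv n := rfl

section Parts
variable {p q : ℕ} [NeZero q] (t : (ZMod (p ^ 2))ˣ)

lemma part1 (ht : orderOf t = q) : IsLeftBrace (circ7 p q t) := by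
  refine ⟨?_, ?_, ?_, ?_, ?_⟩
  · intro a b c
    refine Prod.ext ?_ ?_
    · show a.1 + (t : ZMod (p ^ 2)) ^ a.2.val * b.1 + (t : ZMod (p ^ 2)) ^ (a.2 + b.2).val * c.1
        = a.1 + (t : ZMod (p ^ 2)) ^ a.2.val * (b.1 + (t : ZMod (p ^ 2)) ^ b.2.val * c.1)
      rw [tpow_add t ht]; ring
    · exact add_assoc _ _ _
  · intro a; simp [circ7, ZMod.val_zero]
  · intro a; simp [circ7]
  · intro a
    refine ⟨(-((t : ZMod (p ^ 2)) ^ (-a.2).val * a.1), -a.2), Prod.ext ?_ ?_⟩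
    · show -((t : ZMod (p ^ 2)) ^ (-a.2).val * a.1) + (t : ZMod (p ^ 2)) ^ (-a.2).val * a.1
        = (0 : ZMod (p ^ 2) × ZMod q).1
      simp
    · exact neg_add_cancel _
  · intro a b c
    refine Prod.ext ?_ ?_
    · show a.1 + (t : ZMod (p ^ 2)) ^ a.2.val * (b.1 + c.1)
        = (a.1 + (t : ZMod (p ^ 2)) ^ a.2.val * b.1 - a.1
            + (a.1 + (t : ZMod (p ^ 2)) ^ a.2.val * c.1) : ZMod (p ^ 2))
      ring
    · show a.2 + (b.2 + c.2) = a.2 + b.2 - a.2 + (a.2 + c.2)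
      ring

lemma part2 (ht : orderOf t = q) : ∀ x x' : ZMod (p ^ 2) × ZMod q, circ7 p q t x' x = 0 →
    ∀ y z, x + circ7 p q t y z = circ7 p q t (circ7 p q t (x + y) x') (x + z) := by
  intro x x' h y z
  have h2 : x'.2 = -x.2 := by
    have := congrArg Prod.snd h
    simp only [circ7, Prod.snd_zero] at this
    linear_combination this
  have h1 : x'.1 = -((t : ZMod (p ^ 2)) ^ (-x.2).val * x.1) := by
    have := congrArg Prod.fst h
    simp only [circ7, Prod.fst_zero, h2] at this
    linear_combination this
  have key : (t : ZMod (p ^ 2)) ^ (x.2 + y.2).val * (t : ZMod (p ^ 2)) ^ (-x.2).val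
      = (t : ZMod (p ^ 2)) ^ y.2.val := by
    rw [tpow_add t ht, mul_comm ((t : ZMod (p ^ 2)) ^ x.2.val), mul_assoc,
      tpow_neg_mul t ht, mul_one]
  have key2 : (t : ZMod (p ^ 2)) ^ (x.2 + y.2 + x'.2).val
      = (t : ZMod (p ^ 2)) ^ y.2.val := by
    rw [h2, add_comm x.2 y.2, add_assoc, add_neg_cancel, add_zero]
  refine Prod.ext ?_ ?_
  · show x.1 + (y.1 + (t : ZMod (p ^ 2)) ^ y.2.val * z.1)
      = (x + y).1 + (t : ZMod (p ^ 2)) ^ (x.2 + y.2).val * x'.1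
          + (t : ZMod (p ^ 2)) ^ ((x + y).2 + x'.2).val * ((x + z).1)
    simp only [Prod.fst_add, Prod.snd_add, h1, key2]
    linear_combination (x.1 : ZMod (p ^ 2)) * key
  · show x.2 + (y.2 + z.2) = (x + y).2 + x'.2 + ((x + z).2)
    simp only [Prod.snd_add, h2]
    ring

lemma kerset (ht : orderOf t = q) :
    kerLambda (circ7 p q t) = {a : ZMod (p ^ 2) × ZMod q | a.2 = 0} := by
  ext a
  constructor
  · intro h
    have h1 := congrArg Prod.fst (h ((1 : ZMod (p ^ 2)), (0 : ZMod q)))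
    simp only [circ7, Prod.fst_add, mul_one] at h1
    have h2 : (t : ZMod (p ^ 2)) ^ a.2.val = 1 := by linear_combination h1
    have h3 : t ^ a.2.val = 1 := Units.ext (by simpa using h2)
    have h4 := orderOf_dvd_of_pow_eq_one h3
    rw [ht] at h4
    have h5 : a.2.val = 0 := Nat.eq_zero_of_dvd_of_lt h4 (ZMod.val_lt a.2)
    exact (ZMod.val_eq_zero a.2).mp h5
  · intro h b
    have hh : (t : ZMod (p ^ 2)) ^ a.2.val = 1 := by
      rw [show a.2 = 0 from h, ZMod.val_zero, pow_zero]
    simp only [circ7, hh, one_mul]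
    rfl

lemma part3 (ht : orderOf t = q) : Nat.card ↥(kerLambda (circ7 p q t)) = p ^ 2 := by
  rw [kerset t ht]
  rw [Nat.card_congr (sndZeroEquiv (ZMod (p ^ 2)) (ZMod q)), Nat.card_zmod]

end Parts

def CircT {B : Type*} (_f : B → B → B) : Type _ := B

set_option maxHeartbeats 1000000 in
theorem brace_core (p q : ℕ) (hp : p.Prime) (hq : q.Prime) (hpq : p ≠ q)
    (hmod : p ≡ 1 [MOD q]) (t : (ZMod (p ^ 2))ˣ) (ht : orderOf t = q)
    (g : ZMod (p ^ 2) × ZMod q → ZMod (p ^ 2) × ZMod q → ZMod (p ^ 2) × ZMod q)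
    (hg : IsLeftBrace g) (hker : Nat.card ↥(kerLambda g) = p ^ 2) :
    ∃ e : (ZMod (p ^ 2) × ZMod q) ≃ (ZMod (p ^ 2) × ZMod q),
      (∀ a b, e (a + b) = e a + e b) ∧
      (∀ a b, e (g a b) = circ7 p q t (e a) (e b)) := by
  haveI : Fact p.Prime := ⟨hp⟩
  haveI : Fact q.Prime := ⟨hq⟩
  haveI : NeZero q := ⟨hq.ne_zero⟩
  haveI : NeZero (p ^ 2) := ⟨pow_ne_zero 2 hp.ne_zero⟩
  have hq2 : 2 ≤ q := hq.two_le
  have hp2 : 2 ≤ p := hp.two_le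
  have hdvd : q ∣ p - 1 := (Nat.modEq_iff_dvd' hp.one_lt.le).mp hmod.symm
  have hqlt : q < p := lt_of_le_of_lt (Nat.le_of_dvd (by omega) hdvd) (by omega)
  -- the circle group
  letI : Mul (CircT g) := ⟨g⟩
  letI : One (CircT g) := ⟨(0 : ZMod (p ^ 2) × ZMod q)⟩
  letI : Inv (CircT g) := ⟨fun a => Classical.choose (hg.2.2.2.1 a)⟩
  letI grp : Group (CircT g) :=
    Group.ofLeftAxioms hg.1 hg.2.1 (fun a => Classical.choose_spec (hg.2.2.2.1 a))
  let ι : (ZMod (p ^ 2) × ZMod q) → CircT g := fun x => x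
  let κ : CircT g → (ZMod (p ^ 2) × ZMod q) := fun x => x
  have hinvr : ∀ a, g a (κ (ι a)⁻¹) = 0 := fun a => mul_inv_cancel (ι a)
  have hinvl : ∀ a, g (κ (ι a)⁻¹) a = 0 := fun a => inv_mul_cancel (ι a)
  have cancel : ∀ a b c : ZMod (p ^ 2) × ZMod q, g a b = g a c → b = c :=
    fun a b c h => mul_left_cancel (a := ι a) (b := ι b) (c := ι c) h
  -- the lambda maps
  have hbr : ∀ a b c, g a (b + c) = g a b - a + g a c := hg.2.2.2.2
  let Lam : (ZMod (p ^ 2) × ZMod q) → (ZMod (p ^ 2) × ZMod q) →+ (ZMod (p ^ 2) × ZMod q) :=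
    fun a => AddMonoidHom.mk' (fun b => g a b - a) (fun b c => by
      show g a (b + c) - a = (g a b - a) + (g a c - a)
      rw [hbr]; abel)
  have LamApp : ∀ a b, Lam a b = g a b - a := fun _ _ => rfl
  have gLam : ∀ a b, g a b = a + Lam a b := fun a b => by rw [LamApp]; abel
  have Lam0 : ∀ b, Lam 0 b = b := fun b => by rw [LamApp, hg.2.1]; abel
  have LamHom : ∀ a b c, Lam (g a b) c = Lam a (Lam b c) := by
    intro a b c
    have h0 := hbr a (g b c - b) b
    rw [sub_add_cancel] at h0
    have hx : g a (g b c - b) = g a (g b c) - g a b + a := by rw [h0]; abel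
    simp only [LamApp]
    rw [hx, hg.1]
    abel
  have LamSurj : ∀ a c, ∃ b, Lam a b = c := by
    intro a c
    refine ⟨g (κ (ι a)⁻¹) (c + a), ?_⟩
    have h1 : g a (g (κ (ι a)⁻¹) (c + a)) = c + a := by
      rw [← hg.1, hinvr a, hg.2.1]
    rw [LamApp, h1, add_sub_cancel_right]
  -- kernel is an additive subgroup
  have kerAdd : ∀ a b, a ∈ kerLambda g → b ∈ kerLambda g → a + b ∈ kerLambda g := by
    intro a b ha hb c
    calc g (a + b) c = g (g a b) c := by rw [ha b]
      _ = g a (g b c) := hg.1 _ _ _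
      _ = g a (b + c) := by rw [hb c]
      _ = a + (b + c) := ha _
      _ = a + b + c := (add_assoc _ _ _).symm
  have kerNeg : ∀ a, a ∈ kerLambda g → -a ∈ kerLambda g := by
    intro a ha
    have hainv : κ (ι a)⁻¹ ∈ kerLambda g := by
      intro b
      apply cancel a
      have h1 : g a (g (κ (ι a)⁻¹) b) = b := by
        rw [← hg.1, hinvr a, hg.2.1]
      have h2 : g a (κ (ι a)⁻¹ + b) = b := by
        rw [hbr, hinvr, ha b]; abel
      rw [h1, h2]
    have heq : κ (ι a)⁻¹ = -a := by
      have h0 := hainv a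
      rw [hinvl a] at h0
      exact eq_neg_of_add_eq_zero_left h0.symm
    rw [← heq]; exact hainv
  let K : AddSubgroup (ZMod (p ^ 2) × ZMod q) :=
    { carrier := kerLambda g
      add_mem' := fun ha hb => kerAdd _ _ ha hb
      zero_mem' := fun b => by rw [hg.2.1, zero_add]
      neg_mem' := fun ha => kerNeg _ ha }
  have hcardK : Nat.card K = p ^ 2 := hker
  have kerTor : ∀ a ∈ kerLambda g, a.2 = 0 := by
    intro a ha
    have h1 : addOrderOf a ∣ p ^ 2 := by
      have h := AddSubgroup.addOrderOf_dvd_natCard K ha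
      rwa [hcardK] at h
    have h2 : (p ^ 2) • a = 0 := addOrderOf_dvd_iff_nsmul_eq_zero.mp h1
    have h3 : ((p ^ 2 : ℕ) : ZMod q) * a.2 = 0 := by
      have := congrArg Prod.snd h2
      rwa [nsmul_eq_mul, Prod.snd_mul, Prod.snd_natCast, Prod.snd_zero] at this
    have h5 : ((p ^ 2 : ℕ) : ZMod q) ≠ 0 := by
      rw [Ne, ZMod.natCast_eq_zero_iff]
      intro hdd
      exact hpq ((Nat.prime_dvd_prime_iff_eq hq hp).mp (hq.dvd_of_dvd_pow hdd)).symm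
    exact (mul_eq_zero.mp h3).resolve_left h5
  have kerEq : kerLambda g = {a : ZMod (p ^ 2) × ZMod q | a.2 = 0} := by
    have hPcard : Nat.card ↥{a : ZMod (p ^ 2) × ZMod q | a.2 = 0} = p ^ 2 := by
      rw [Nat.card_congr (sndZeroEquiv (ZMod (p ^ 2)) (ZMod q)), Nat.card_zmod]
    refine Set.eq_of_subset_of_ncard_le (fun a ha => kerTor a ha) ?_ (Set.toFinite _)
    rw [← Nat.card_coe_set_eq, ← Nat.card_coe_set_eq, hPcard, hker]
  -- components of lambda
  let u : (ZMod (p ^ 2) × ZMod q) → ZMod (p ^ 2) := fun a => (Lam a (1, 0)).1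
  let w : (ZMod (p ^ 2) × ZMod q) → ZMod q := fun a => (Lam a (0, 1)).2
  have LamP2 : ∀ a (b : ZMod (p ^ 2) × ZMod q), b.2 = 0 → (Lam a b).2 = 0 := by
    intro a b hb
    have h1 : (p ^ 2) • b = 0 := by
      rw [nsmul_eq_mul]
      refine Prod.ext ?_ ?_
      · rw [Prod.fst_mul, Prod.fst_natCast, Prod.fst_zero, ZMod.natCast_self, zero_mul]
      · rw [Prod.snd_mul, Prod.snd_zero, hb, mul_zero]
    have h2 : (p ^ 2) • Lam a b = 0 := by rw [← map_nsmul, h1, map_zero]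
    have h3 : ((p ^ 2 : ℕ) : ZMod q) * (Lam a b).2 = 0 := by
      have := congrArg Prod.snd h2
      rwa [nsmul_eq_mul, Prod.snd_mul, Prod.snd_natCast, Prod.snd_zero] at this
    have h5 : ((p ^ 2 : ℕ) : ZMod q) ≠ 0 := by
      rw [Ne, ZMod.natCast_eq_zero_iff]
      intro hdd
      exact hpq ((Nat.prime_dvd_prime_iff_eq hq hp).mp (hq.dvd_of_dvd_pow hdd)).symm
    exact (mul_eq_zero.mp h3).resolve_left h5
  have LamQ : ∀ a (b : ZMod (p ^ 2) × ZMod q), b.1 = 0 → (Lam a b).1 = 0 := by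
    intro a b hb
    have h1 : q • b = 0 := by
      rw [nsmul_eq_mul]
      refine Prod.ext ?_ ?_
      · rw [Prod.fst_mul, Prod.fst_zero, hb, mul_zero]
      · rw [Prod.snd_mul, Prod.snd_natCast, Prod.snd_zero, ZMod.natCast_self, zero_mul]
    have h2 : q • Lam a b = 0 := by rw [← map_nsmul, h1, map_zero]
    have h3 : ((q : ℕ) : ZMod (p ^ 2)) * (Lam a b).1 = 0 := by
      have := congrArg Prod.fst h2
      rwa [nsmul_eq_mul, Prod.fst_mul, Prod.fst_natCast, Prod.fst_zero] at this
    have hqu : IsUnit ((q : ℕ) : ZMod (p ^ 2)) := by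
      rw [ZMod.isUnit_iff_coprime]
      exact ((Nat.coprime_primes hq hp).mpr (Ne.symm hpq)).pow_right 2
    exact (hqu.mul_right_eq_zero).mp h3
  have LamEval : ∀ a (b : ZMod (p ^ 2) × ZMod q), Lam a b = (u a * b.1, w a * b.2) := by
    intro a b
    have h10 : Lam a (1, 0) = (u a, 0) := Prod.ext rfl (LamP2 a (1, 0) rfl)
    have h01 : Lam a (0, 1) = (0, w a) := Prod.ext (LamQ a (0, 1) rfl) rfl
    have hb1 : ((b.1, 0) : ZMod (p ^ 2) × ZMod q)
        = b.1.val • ((1 : ZMod (p ^ 2)), (0 : ZMod q)) := by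
      refine Prod.ext ?_ ?_
      · show b.1 = b.1.val • (1 : ZMod (p ^ 2))
        rw [nsmul_eq_mul, mul_one, ZMod.natCast_val, ZMod.cast_id]
      · show (0 : ZMod q) = b.1.val • (0 : ZMod q)
        rw [smul_zero]
    have hb2 : ((0, b.2) : ZMod (p ^ 2) × ZMod q)
        = b.2.val • ((0 : ZMod (p ^ 2)), (1 : ZMod q)) := by
      refine Prod.ext ?_ ?_
      · show (0 : ZMod (p ^ 2)) = b.2.val • (0 : ZMod (p ^ 2))
        rw [smul_zero]
      · show b.2 = b.2.val • (1 : ZMod q)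
        rw [nsmul_eq_mul, mul_one, ZMod.natCast_val, ZMod.cast_id]
    have hfst : Lam a (b.1, 0) = (u a * b.1, 0) := by
      rw [hb1, map_nsmul, h10]
      refine Prod.ext ?_ ?_
      · show b.1.val • u a = u a * b.1
        rw [nsmul_eq_mul, ZMod.natCast_val, ZMod.cast_id, mul_comm]
      · show b.1.val • (0 : ZMod q) = 0
        rw [smul_zero]
    have hsnd : Lam a (0, b.2) = (0, w a * b.2) := by
      rw [hb2, map_nsmul, h01]
      refine Prod.ext ?_ ?_
      · show b.2.val • (0 : ZMod (p ^ 2)) = 0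
        rw [smul_zero]
      · show b.2.val • w a = w a * b.2
        rw [nsmul_eq_mul, ZMod.natCast_val, ZMod.cast_id, mul_comm]
    have hb : b = (b.1, 0) + (0, b.2) := by
      refine Prod.ext ?_ ?_
      · show b.1 = b.1 + 0; rw [add_zero]
      · show b.2 = 0 + b.2; rw [zero_add]
    calc Lam a b = Lam a ((b.1, 0) + (0, b.2)) := by rw [← hb]
      _ = Lam a (b.1, 0) + Lam a (0, b.2) := map_add _ _ _
      _ = (u a * b.1, 0) + (0, w a * b.2) := by rw [hfst, hsnd]
      _ = (u a * b.1, w a * b.2) := by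
          refine Prod.ext ?_ ?_
          · show u a * b.1 + 0 = u a * b.1; rw [add_zero]
          · show 0 + w a * b.2 = w a * b.2; rw [zero_add]
  have uhom : ∀ a b, u (g a b) = u a * u b := by
    intro a b
    calc u (g a b) = (Lam (g a b) (1, 0)).1 := rfl
      _ = (Lam a (Lam b (1, 0))).1 := by rw [LamHom]
      _ = (Lam a (u b, 0)).1 := by
          rw [LamEval b]; norm_num
      _ = u a * u b := by rw [LamEval a]
  have whom : ∀ a b, w (g a b) = w a * w b := by
    intro a b
    calc w (g a b) = (Lam (g a b) (0, 1)).2 := rfl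
      _ = (Lam a (Lam b (0, 1))).2 := by rw [LamHom]
      _ = (Lam a (0, w b)).2 := by
          rw [LamEval b]; norm_num
      _ = w a * w b := by rw [LamEval a]
  have u0 : u 0 = 1 := by show (Lam 0 (1, 0)).1 = 1; rw [Lam0]
  have w0 : w 0 = 1 := by show (Lam 0 (0, 1)).2 = 1; rw [Lam0]
  have wunit : ∀ a, IsUnit (w a) := by
    intro a
    obtain ⟨b, hb⟩ := LamSurj a (0, 1)
    have h := congrArg Prod.snd hb
    rw [LamEval] at h
    exact IsUnit.of_mul_eq_one _ h
  have uunit : ∀ a, IsUnit (u a) := by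
    intro a
    obtain ⟨b, hb⟩ := LamSurj a (1, 0)
    have h := congrArg Prod.fst hb
    rw [LamEval] at h
    exact IsUnit.of_mul_eq_one _ h
  have keruw : ∀ a, a ∈ kerLambda g ↔ (u a = 1 ∧ w a = 1) := by
    intro a
    constructor
    · intro ha
      constructor
      · show (Lam a (1, 0)).1 = 1
        rw [LamApp, ha (1, 0)]
        show (a.1 + 1 - a.1 : ZMod (p ^ 2)) = 1; ring
      · show (Lam a (0, 1)).2 = 1
        rw [LamApp, ha (0, 1)]
        show (a.2 + 1 - a.2 : ZMod q) = 1; ring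
    · rintro ⟨hu, hw⟩ b
      rw [gLam, LamEval, hu, hw]
      refine congrArg (a + ·) ?_
      refine Prod.ext ?_ ?_
      · show 1 * b.1 = b.1; rw [one_mul]
      · show 1 * b.2 = b.2; rw [one_mul]
  -- w is trivial
  have cardCirc : Nat.card (CircT g) = p ^ 2 * q := by
    rw [show Nat.card (CircT g) = Nat.card (ZMod (p ^ 2) × ZMod q) from
      Nat.card_congr (Equiv.cast rfl), Nat.card_prod, Nat.card_zmod, Nat.card_zmod]
  have wpow : ∀ (a : ZMod (p ^ 2) × ZMod q) (k : ℕ), w (κ (ι a ^ k)) = w a ^ k := by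
    intro a k
    induction k with
    | zero =>
      rw [pow_zero, pow_zero]
      exact w0
    | succ n ih =>
      calc w (κ (ι a ^ (n + 1))) = w (g (κ (ι a ^ n)) a) := by rw [pow_succ]; rfl
        _ = w (κ (ι a ^ n)) * w a := whom _ _
        _ = w a ^ n * w a := by rw [ih]
        _ = w a ^ (n + 1) := (pow_succ _ _).symm
  have wone : ∀ a, w a = 1 := by
    intro a
    have h1 : w a ^ (p ^ 2 * q) = 1 := by
      calc w a ^ (p ^ 2 * q) = w (κ (ι a ^ (p ^ 2 * q))) := (wpow a _).symm
        _ = w (κ (1 : CircT g)) := by rw [← cardCirc, pow_card_eq_one']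
        _ = 1 := w0
    have h2 : w a ^ (q - 1) = 1 := ZMod.pow_card_sub_one_eq_one (wunit a).ne_zero
    have h3 : w a ^ Nat.gcd (p ^ 2 * q) (q - 1) = 1 := pow_gcd_eq_one.mpr ⟨h1, h2⟩
    have c1 : Nat.Coprime p (q - 1) := by
      rw [Nat.Prime.coprime_iff_not_dvd hp]
      intro hdd
      have := Nat.le_of_dvd (by omega) hdd
      omega
    have c2 : Nat.Coprime q (q - 1) := by
      have h2' : Nat.Coprime (q - 1 + 1) (q - 1) :=
        Nat.coprime_self_add_left.mpr (Nat.coprime_one_left _)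
      rwa [show q - 1 + 1 = q from by omega] at h2'
    have hco : Nat.gcd (p ^ 2 * q) (q - 1) = 1 := Nat.Coprime.mul (c1.pow_left 2) c2
    rwa [hco, pow_one] at h3
  have hsnd2 : ∀ a b, (g a b).2 = a.2 + b.2 := by
    intro a b
    rw [gLam, LamEval]
    show a.2 + w a * b.2 = a.2 + b.2
    rw [wone, one_mul]
  -- u only depends on the second coordinate
  have ufib : ∀ a b : ZMod (p ^ 2) × ZMod q, a.2 = b.2 → u a = u b := by
    intro a b hab
    have e1 : g (κ (ι a * (ι b)⁻¹)) b = a := inv_mul_cancel_right (ι a) (ι b)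
    have hk2 : (κ (ι a * (ι b)⁻¹)).2 = 0 := by
      have h := hsnd2 (κ (ι a * (ι b)⁻¹)) b
      rw [e1, ← hab] at h
      linear_combination -h
    have hkker : κ (ι a * (ι b)⁻¹) ∈ kerLambda g := by rw [kerEq]; exact hk2
    have hu1 : u (κ (ι a * (ι b)⁻¹)) = 1 := ((keruw _).mp hkker).1
    calc u a = u (g (κ (ι a * (ι b)⁻¹)) b) := by rw [e1]
      _ = u (κ (ι a * (ι b)⁻¹)) * u b := uhom _ _
      _ = u b := by rw [hu1, one_mul]
  let U : ZMod q → ZMod (p ^ 2) := fun m => u (0, m)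
  have Ueq : ∀ a : ZMod (p ^ 2) × ZMod q, u a = U a.2 := fun a => ufib a (0, a.2) rfl
  have Uadd : ∀ m m', U (m + m') = U m * U m' := by
    intro m m'
    have h := uhom ((0 : ZMod (p ^ 2)), m) ((0 : ZMod (p ^ 2)), m')
    have h2 := hsnd2 ((0 : ZMod (p ^ 2)), m) ((0 : ZMod (p ^ 2)), m')
    calc U (m + m') = U ((g ((0 : ZMod (p ^ 2)), m) ((0 : ZMod (p ^ 2)), m')).2) := by rw [h2]
      _ = u (g ((0 : ZMod (p ^ 2)), m) ((0 : ZMod (p ^ 2)), m')) := (Ueq _).symm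
      _ = U m * U m' := h
  have U0 : U 0 = 1 := u0
  have Upow : ∀ k : ℕ, U ((k : ZMod q)) = U 1 ^ k := by
    intro k
    induction k with
    | zero => simpa using U0
    | succ n ih =>
      have e1 : ((((n : ℕ) + 1) : ℕ) : ZMod q) = ((n : ℕ) : ZMod q) + 1 := by push_cast; ring
      calc U (((n : ℕ) + 1 : ℕ) : ZMod q) = U (((n : ℕ) : ZMod q) + 1) := by rw [e1]
        _ = U ((n : ℕ) : ZMod q) * U 1 := Uadd _ _
        _ = U 1 ^ n * U 1 := by rw [ih]
        _ = U 1 ^ (n + 1) := (pow_succ _ _).symm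
  have UofVal : ∀ m : ZMod q, U m = U 1 ^ m.val := by
    intro m
    have hm : ((m.val : ℕ) : ZMod q) = m := by rw [ZMod.natCast_val, ZMod.cast_id]
    calc U m = U ((m.val : ℕ) : ZMod q) := by rw [hm]
      _ = U 1 ^ m.val := Upow _
  -- the element s = U 1 and its unit version
  have hsq : U 1 ^ q = 1 := by
    have h := Upow q
    rw [ZMod.natCast_self, U0] at h
    exact h.symm
  have hsne : U 1 ≠ 1 := by
    intro hs1
    have h01 : ((0 : ZMod (p ^ 2)), (1 : ZMod q)) ∈ kerLambda g := by
      rw [keruw]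
      refine ⟨?_, wone _⟩
      have := Ueq ((0 : ZMod (p ^ 2)), (1 : ZMod q))
      rw [this, hs1]
    rw [kerEq] at h01
    exact one_ne_zero (h01 : (1 : ZMod q) = 0)
  let S : (ZMod (p ^ 2))ˣ := (uunit ((0 : ZMod (p ^ 2)), (1 : ZMod q))).unit
  have hS : (S : ZMod (p ^ 2)) = U 1 := rfl
  have hSq : S ^ q = 1 := by
    apply Units.ext
    rw [Units.val_pow_eq_pow_val, hS, hsq, Units.val_one]
  have hSne : S ≠ 1 := by
    intro h
    exact hsne (by rw [← hS, h, Units.val_one])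
  -- the reduction mod p and injectivity of q-th roots
  have hpdvd : p ∣ p ^ 2 := dvd_pow_self p two_ne_zero
  let ρ : ZMod (p ^ 2) →+* ZMod p := ZMod.castHom hpdvd (ZMod p)
  have keyInj : ∀ x : (ZMod (p ^ 2))ˣ, x ^ q = 1 →
      Units.map ρ.toMonoidHom x = 1 → x = 1 := by
    intro x hxq hx1
    have hζρ : ρ (x : ZMod (p ^ 2)) = 1 := congrArg Units.val hx1
    have hb : ∃ a : ZMod (p ^ 2), (x : ZMod (p ^ 2)) = 1 + (p : ZMod (p ^ 2)) * a := by
      have h0 : ρ ((x : ZMod (p ^ 2)) - 1) = 0 := by rw [map_sub, hζρ, map_one, sub_self]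
      have hdval : (((x : ZMod (p ^ 2)) - 1).val : ZMod (p ^ 2)) = (x : ZMod (p ^ 2)) - 1 := by
        rw [ZMod.natCast_val, ZMod.cast_id]
      have h1 : ((((x : ZMod (p ^ 2)) - 1).val : ℕ) : ZMod p) = 0 := by
        have h2 : ρ ((((x : ZMod (p ^ 2)) - 1).val : ℕ) : ZMod (p ^ 2))
            = ((((x : ZMod (p ^ 2)) - 1).val : ℕ) : ZMod p) := map_natCast ρ _
        rw [hdval] at h2
        rw [← h2, h0]
      rw [ZMod.natCast_eq_zero_iff] at h1
      obtain ⟨c, hc⟩ := h1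
      refine ⟨(c : ZMod (p ^ 2)), ?_⟩
      have h3 : (x : ZMod (p ^ 2)) - 1 = ((p * c : ℕ) : ZMod (p ^ 2)) := by
        rw [← hc, hdval]
      have h4 : (x : ZMod (p ^ 2)) - 1 = (p : ZMod (p ^ 2)) * (c : ZMod (p ^ 2)) := by
        rw [h3]; push_cast; ring
      linear_combination h4
    obtain ⟨a, ha⟩ := hb
    have hbb : ((p : ZMod (p ^ 2)) * a) * ((p : ZMod (p ^ 2)) * a) = 0 := by
      have hpp : (p : ZMod (p ^ 2)) * (p : ZMod (p ^ 2)) = 0 := by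
        have h5 : ((p ^ 2 : ℕ) : ZMod (p ^ 2)) = 0 := ZMod.natCast_self _
        push_cast at h5
        linear_combination h5
      calc ((p : ZMod (p ^ 2)) * a) * ((p : ZMod (p ^ 2)) * a)
          = ((p : ZMod (p ^ 2)) * (p : ZMod (p ^ 2))) * (a * a) := by ring
        _ = 0 := by rw [hpp, zero_mul]
    have binom : ∀ n : ℕ, (1 + (p : ZMod (p ^ 2)) * a) ^ n
        = 1 + (n : ZMod (p ^ 2)) * ((p : ZMod (p ^ 2)) * a) := by
      intro n
      induction n with
      | zero => simp
      | succ m ih =>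
        calc (1 + (p : ZMod (p ^ 2)) * a) ^ (m + 1)
            = (1 + (p : ZMod (p ^ 2)) * a) ^ m * (1 + (p : ZMod (p ^ 2)) * a) := pow_succ _ _
          _ = (1 + (m : ZMod (p ^ 2)) * ((p : ZMod (p ^ 2)) * a))
              * (1 + (p : ZMod (p ^ 2)) * a) := by rw [ih]
          _ = 1 + ((m : ZMod (p ^ 2)) + 1) * ((p : ZMod (p ^ 2)) * a)
              + (m : ZMod (p ^ 2)) * (((p : ZMod (p ^ 2)) * a) * ((p : ZMod (p ^ 2)) * a)) := by
              ring
          _ = 1 + (((m + 1 : ℕ)) : ZMod (p ^ 2)) * ((p : ZMod (p ^ 2)) * a) := by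
              rw [hbb, mul_zero, add_zero]
              push_cast
              ring
    have hx1q : ((x : ZMod (p ^ 2))) ^ q = 1 := by
      have h6 := congrArg Units.val hxq
      rw [Units.val_pow_eq_pow_val, Units.val_one] at h6
      exact h6
    rw [ha, binom] at hx1q
    have hqb : ((q : ℕ) : ZMod (p ^ 2)) * ((p : ZMod (p ^ 2)) * a) = 0 := by
      linear_combination hx1q
    have hqu : IsUnit ((q : ℕ) : ZMod (p ^ 2)) := by
      rw [ZMod.isUnit_iff_coprime]
      exact ((Nat.coprime_primes hq hp).mpr (Ne.symm hpq)).pow_right 2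
    have hb0 : (p : ZMod (p ^ 2)) * a = 0 := (hqu.mul_right_eq_zero).mp hqb
    apply Units.ext
    rw [Units.val_one, ha, hb0, add_zero]
  -- counting q-th roots of unity
  have cardRoots : Nat.card {x : (ZMod (p ^ 2))ˣ // x ^ q = 1} ≤ q := by
    classical
    have inj : Function.Injective (fun x : {x : (ZMod (p ^ 2))ˣ // x ^ q = 1} =>
        (⟨Units.map ρ.toMonoidHom x.1, by rw [← map_pow, x.2, map_one]⟩ :
          {y : (ZMod p)ˣ // y ^ q = 1})) := by
      rintro ⟨x, hx⟩ ⟨y, hy⟩ hxy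
      simp only [Subtype.mk.injEq] at hxy ⊢
      have h1 : (x * y⁻¹) ^ q = 1 := by
        rw [mul_pow, hx, inv_pow, hy, inv_one, one_mul]
      have h2 : Units.map ρ.toMonoidHom (x * y⁻¹) = 1 := by
        rw [map_mul, map_inv, hxy, mul_inv_cancel]
      exact mul_inv_eq_one.mp (keyInj _ h1 h2)
    calc Nat.card {x : (ZMod (p ^ 2))ˣ // x ^ q = 1}
        ≤ Nat.card {y : (ZMod p)ˣ // y ^ q = 1} := Nat.card_le_card_of_injective _ inj
      _ ≤ q := by
        rw [Nat.card_eq_fintype_card, Fintype.card_subtype]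
        exact IsCyclic.card_pow_eq_one_le hq.pos
  let Troot : Subgroup (ZMod (p ^ 2))ˣ :=
    { carrier := {x | x ^ q = 1}
      mul_mem' := fun {x} {y} hx hy => by
        have hx' : x ^ q = 1 := hx
        have hy' : y ^ q = 1 := hy
        show (x * y) ^ q = 1
        rw [mul_pow, hx', hy', one_mul]
      one_mem' := one_pow q
      inv_mem' := fun {x} hx => by
        have hx' : x ^ q = 1 := hx
        show x⁻¹ ^ q = 1
        rw [inv_pow, hx', inv_one] }
  have hzle : Subgroup.zpowers t ≤ Troot := by
    rintro x ⟨k, rfl⟩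
    show (t ^ k) ^ q = 1
    have htq : t ^ q = 1 := by rw [← ht]; exact pow_orderOf_eq_one t
    rw [← zpow_natCast, ← zpow_mul, mul_comm, zpow_mul, zpow_natCast, htq, one_zpow]
  have hTcard : Nat.card Troot ≤ q := cardRoots
  have hzeq : Subgroup.zpowers t = Troot := by
    apply Subgroup.eq_of_le_of_card_ge hzle
    calc Nat.card Troot ≤ q := hTcard
      _ = Nat.card (Subgroup.zpowers t) := by rw [Nat.card_zpowers, ht]
  have hSmem : S ∈ Subgroup.zpowers t := by
    rw [hzeq]
    exact hSq
  obtain ⟨k, hk⟩ := (Submonoid.mem_powers_iff S t).mp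
    (mem_powers_iff_mem_zpowers.mpr hSmem)
  have hkq : ((k : ℕ) : ZMod q) ≠ 0 := by
    intro h0
    rw [ZMod.natCast_eq_zero_iff] at h0
    rw [← ht] at h0
    have h1 : t ^ k = 1 := orderOf_dvd_iff_pow_eq_one.mp h0
    rw [hk] at h1
    exact hSne h1
  -- the final equivalence
  let ψ : (ZMod (p ^ 2) × ZMod q) ≃ (ZMod (p ^ 2) × ZMod q) :=
    (Equiv.refl (ZMod (p ^ 2))).prodCongr (Equiv.mulLeft₀ ((k : ℕ) : ZMod q) hkq)
  have ψapp : ∀ x : ZMod (p ^ 2) × ZMod q, ψ x = (x.1, ((k : ℕ) : ZMod q) * x.2) :=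
    fun x => rfl
  refine ⟨ψ, ?_, ?_⟩
  · intro a b
    rw [ψapp, ψapp, ψapp]
    refine Prod.ext ?_ ?_
    · show (a + b).1 = a.1 + b.1
      rfl
    · show ((k : ℕ) : ZMod q) * (a + b).2
        = ((k : ℕ) : ZMod q) * a.2 + ((k : ℕ) : ZMod q) * b.2
      show ((k : ℕ) : ZMod q) * (a.2 + b.2)
        = ((k : ℕ) : ZMod q) * a.2 + ((k : ℕ) : ZMod q) * b.2
      ring
  · intro a b
    have gEq : g a b = (a.1 + u a * b.1, a.2 + b.2) := by
      rw [gLam a b, LamEval]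
      refine Prod.ext ?_ ?_
      · rfl
      · show a.2 + w a * b.2 = a.2 + b.2
        rw [wone, one_mul]
    have hua : u a = (t : ZMod (p ^ 2)) ^ ((((k : ℕ) : ZMod q) * a.2).val) := by
      have e2 : S ^ a.2.val = t ^ ((((k : ℕ) : ZMod q) * a.2).val) := by
        rw [← hk, ← pow_mul]
        apply tpow_congr t ht
        have e3 : (((k : ℕ) : ZMod q) * a.2) = ((k * a.2.val : ℕ) : ZMod q) := by
          rw [Nat.cast_mul, ZMod.natCast_val, ZMod.cast_id]
        rw [e3, ZMod.val_natCast]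
        rw [Nat.mod_mod_of_dvd _ dvd_rfl]
      have e1 : u a = (S : ZMod (p ^ 2)) ^ a.2.val := by
        rw [Ueq a, UofVal, hS]
      rw [e1, ← Units.val_pow_eq_pow_val, e2, Units.val_pow_eq_pow_val]
    rw [gEq, ψapp, ψapp, ψapp]
    refine Prod.ext ?_ ?_
    · show a.1 + u a * b.1
        = a.1 + (t : ZMod (p ^ 2)) ^ ((((k : ℕ) : ZMod q) * a.2).val) * b.1
      rw [hua]
    · show ((k : ℕ) : ZMod q) * (a.2 + b.2)
        = ((k : ℕ) : ZMod q) * a.2 + ((k : ℕ) : ZMod q) * b.2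
      ring

/-- Let `p, q` be distinct primes with `p ≡ 1 (mod q)` and let `t` be an element of
order `q` in `(ℤ/p²)ˣ`.  On `B = ℤ/p² × ℤ/q`, `(n,m) ∘ (s,r) = (n + tᵐ s, m + r)`
makes `(B,+,∘)` a left brace which is in fact a bi-skew brace, with `|ker λ| = p²`;
`(B,∘)` is isomorphic to `ℤ/p² ⋊ ℤ/q` where the generator `1` of `ℤ/q` acts by
multiplication by `t`; and `(B,+,∘)` is, up to brace isomorphism, the unique left
brace with cyclic additive group of order `p²q` and `|ker λ| = p²`. -/
theorem stmt_7 (p q : ℕ) (hp : p.Prime) (hq : q.Prime) (hpq : p ≠ q)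
    (hmod : p ≡ 1 [MOD q]) (t : (ZMod (p ^ 2))ˣ) (ht : orderOf t = q) :
    IsLeftBrace (circ7 p q t) ∧
    (∀ x x' : ZMod (p ^ 2) × ZMod q, circ7 p q t x' x = 0 →
      ∀ y z, x + circ7 p q t y z = circ7 p q t (circ7 p q t (x + y) x') (x + z)) ∧
    Nat.card ↥(kerLambda (circ7 p q t)) = p ^ 2 ∧
    (∃ e : ZMod (p ^ 2) × ZMod q ≃ ZMod (p ^ 2) × ZMod q,
      ∀ a b, e (circ7 p q t a b) =
        ((e a).1 + (t : ZMod (p ^ 2)) ^ ((e a).2).val * (e b).1, (e a).2 + (e b).2)) ∧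
    (∀ (B' : Type) (_ : AddCommGroup B') (g : B' → B' → B'),
      IsAddCyclic B' → Nat.card B' = p ^ 2 * q → IsLeftBrace g →
      Nat.card ↥(kerLambda g) = p ^ 2 →
      ∃ e : B' ≃ ZMod (p ^ 2) × ZMod q,
        (∀ a b, e (a + b) = e a + e b) ∧
        ∀ a b, e (g a b) = circ7 p q t (e a) (e b)) := by
  haveI : NeZero q := ⟨hq.ne_zero⟩
  refine ⟨part1 t ht, part2 t ht, part3 t ht, ⟨Equiv.refl _, fun a b => rfl⟩, ?_⟩
  intro B' iB' g hcyc hcard hbrace hker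
  letI := iB'
  have e1 : ZMod (p ^ 2 * q) ≃+ B' := hcard ▸ zmodAddCyclicAddEquiv hcyc
  let crt := ZMod.chineseRemainder
    (Nat.Coprime.pow_left 2 ((Nat.coprime_primes hp hq).mpr hpq))
  let e0 : B' ≃+ ZMod (p ^ 2) × ZMod q := e1.symm.trans crt.toAddEquiv
  let g' : ZMod (p ^ 2) × ZMod q → ZMod (p ^ 2) × ZMod q → ZMod (p ^ 2) × ZMod q :=
    fun x y => e0 (g (e0.symm x) (e0.symm y))
  have g'app : ∀ x y, g' x y = e0 (g (e0.symm x) (e0.symm y)) := fun _ _ => rfl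
  have hg' : IsLeftBrace g' := by
    refine ⟨?_, ?_, ?_, ?_, ?_⟩
    · intro a b c
      rw [g'app, g'app, g'app, g'app, e0.symm_apply_apply, e0.symm_apply_apply]
      exact congrArg e0 (hbrace.1 _ _ _)
    · intro a
      rw [g'app, map_zero, hbrace.2.1, e0.apply_symm_apply]
    · intro a
      rw [g'app, map_zero, hbrace.2.2.1, e0.apply_symm_apply]
    · intro a
      obtain ⟨a', ha'⟩ := hbrace.2.2.2.1 (e0.symm a)
      refine ⟨e0 a', ?_⟩
      rw [g'app, e0.symm_apply_apply, ha', map_zero]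
    · intro a b c
      rw [g'app, g'app, g'app, map_add, hbrace.2.2.2.2, map_add, map_sub,
        e0.apply_symm_apply]
  have hiff : ∀ a, a ∈ kerLambda g' ↔ e0.symm a ∈ kerLambda g := by
    intro a
    constructor
    · intro hA c
      have h1 := hA (e0 c)
      rw [g'app, e0.symm_apply_apply] at h1
      apply e0.injective
      rw [h1, map_add, e0.apply_symm_apply]
    · intro hA b
      rw [g'app, hA (e0.symm b), map_add, e0.apply_symm_apply, e0.apply_symm_apply]
  have hker' : Nat.card ↥(kerLambda g') = p ^ 2 := by
    rw [Nat.card_congr (Equiv.subtypeEquiv e0.symm.toEquiv (fun a => hiff a))]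
    exact hker
  obtain ⟨e', he'add, he'circ⟩ := brace_core p q hp hq hpq hmod t ht g' hg' hker'
  refine ⟨e0.toEquiv.trans e', ?_, ?_⟩
  · intro a b
    show e' (e0 (a + b)) = e' (e0 a) + e' (e0 b)
    rw [map_add]
    exact he'add _ _
  · intro a b
    have h2 : e0 (g a b) = g' (e0 a) (e0 b) := by
      rw [g'app, e0.symm_apply_apply, e0.symm_apply_apply]
    show e' (e0 (g a b)) = circ7 p q t (e' (e0 a)) (e' (e0 b))
    rw [h2]
    exact he'circ _ _
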